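/- Let (X, 𝓕, μ) be a probability space, T : X → X measure-preserving with respect to a stationary measure m, and suppose μ ≪ m. Then μ is T-AMS: the limits lim_{n→∞} (1/n) Σ_{i=0}^{n-1} μ(T^{-i}A) exist for all A ∈ 𝓕. -/

import Mathlib

open MeasureTheory Filter Finset

theorem ams_of_absolutely_continuous_wrt_stationary
    {X : Type*} [MeasurableSpace X] (μ m : Measure X)
    [IsProbabilityMeasure μ] [IsProbabilityMeasure m]
    (T : X → X) (hT : Measurable T)
    (hstat : ∀ A : Set X, MeasurableSet A → m (T ⁻¹' A) = m A)
    (hac : μ ≪ m) :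
    ∀ A : Set X, MeasurableSet A → ∃ L : ℝ,
      Tendsto (fun n : ℕ => (1 / (n : ℝ)) * ∑ i ∈ Finset.range n, (μ (T^[i] ⁻¹' A)).toReal)
        atTop (nhds L) := by
  intro A hA
  haveI : Fact ((1 : ENNReal) ≤ 2) := ⟨one_le_two⟩
  have hTm : MeasurePreserving T m m :=
    ⟨hT, Measure.ext fun s hs => by rw [Measure.map_apply hT hs, hstat s hs]⟩
  -- density
  set fr : X → ℝ := fun x => (μ.rnDeriv m x).toReal with hfr_def
  have hfr_meas : Measurable fr := (μ.measurable_rnDeriv m).ennreal_toReal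
  have hfr_int : Integrable fr m := Measure.integrable_toReal_rnDeriv
  have hfr_nonneg : ∀ x, 0 ≤ fr x := fun x => ENNReal.toReal_nonneg
  -- truncations
  set g : ℕ → X → ℝ := fun k x => min (fr x) k with hg_def
  have hg_meas : ∀ k, Measurable (g k) := fun k => hfr_meas.min measurable_const
  have hg_nonneg : ∀ k x, 0 ≤ g k x := fun k x => le_min (hfr_nonneg x) (Nat.cast_nonneg k)
  have hg_le : ∀ k x, g k x ≤ fr x := fun k x => min_le_left _ _
  have hg_int : ∀ k, Integrable (g k) m := fun k =>
    hfr_int.mono (hg_meas k).aestronglyMeasurable (ae_of_all _ fun x => by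
      rw [Real.norm_eq_abs, Real.norm_eq_abs, abs_of_nonneg (hg_nonneg k x),
        abs_of_nonneg (hfr_nonneg x)]
      exact hg_le k x)
  -- error terms
  set ε : ℕ → ℝ := fun k => ∫ x, (fr x - g k x) ∂m with hε_def
  have hε_nonneg : ∀ k, 0 ≤ ε k := fun k =>
    integral_nonneg fun x => sub_nonneg.2 (hg_le k x)
  have hε0 : Tendsto ε atTop (nhds 0) := by
    have := tendsto_integral_of_dominated_convergence (μ := m)
      (F := fun k x => fr x - g k x) (f := fun _ => (0 : ℝ)) (bound := fr)
      (fun k => ((hfr_int.sub (hg_int k)).aestronglyMeasurable))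
      hfr_int
      (fun k => ae_of_all _ fun x => by
        rw [Real.norm_eq_abs, abs_of_nonneg (sub_nonneg.2 (hg_le k x))]
        simpa using hg_nonneg k x)
      (ae_of_all _ fun x => by
        refine tendsto_const_nhds.congr' ?_
        filter_upwards [eventually_ge_atTop ⌈fr x⌉₊] with k hk
        have : fr x ≤ (k : ℝ) := le_trans (Nat.le_ceil _) (by exact_mod_cast hk)
        simp [hg_def, min_eq_left this])
    simpa using this
  -- key error bound
  have key : ∀ k (B : Set X), MeasurableSet B →
      |(μ B).toReal - ∫ x in B, g k x ∂m| ≤ ε k := by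
    intro k B hB
    have h1 : (μ B).toReal = ∫ x in B, fr x ∂m :=
      (Measure.setIntegral_toReal_rnDeriv hac B).symm
    rw [h1, ← integral_sub (hfr_int.integrableOn) ((hg_int k).integrableOn),
      abs_of_nonneg (setIntegral_nonneg hB fun x _ => sub_nonneg.2 (hg_le k x))]
    exact setIntegral_le_integral (hfr_int.sub (hg_int k))
      (ae_of_all _ fun x => sub_nonneg.2 (hg_le k x))
  -- Hilbert space setup
  let U : Lp ℝ 2 m →L[ℝ] Lp ℝ 2 m :=
    (Lp.compMeasurePreservingₗᵢ ℝ T hTm).toContinuousLinearMap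
  have hU : ‖U‖ ≤ 1 := LinearIsometry.norm_toContinuousLinearMap_le _
  let e : Lp ℝ 2 m := indicatorConstLp 2 hA (measure_ne_top m A) (1 : ℝ)
  have he : ∀ i : ℕ, ((⇑U)^[i] e : X → ℝ)
      =ᵐ[m] Set.indicator (T^[i] ⁻¹' A) (fun _ => (1 : ℝ)) := by
    intro i
    induction i with
    | zero =>
      simpa using indicatorConstLp_coeFn (μ := m) (p := 2)
        (hs := hA) (hμs := measure_ne_top m A) (c := (1 : ℝ))
    | succ i ih =>
      rw [Function.iterate_succ_apply']
      have h1 : (U ((⇑U)^[i] e) : X → ℝ) =ᵐ[m] ((⇑U)^[i] e : X → ℝ) ∘ T :=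
        Lp.coeFn_compMeasurePreserving _ hTm
      have h2 : (((⇑U)^[i] e : X → ℝ) ∘ T)
          =ᵐ[m] (Set.indicator (T^[i] ⁻¹' A) (fun _ => (1 : ℝ))) ∘ T :=
        hTm.quasiMeasurePreserving.ae_eq ih
      refine (h1.trans h2).trans (ae_of_all _ fun x => ?_)
      have : T^[i + 1] ⁻¹' A = T ⁻¹' (T^[i] ⁻¹' A) := by
        rw [Function.iterate_succ, Set.preimage_comp]
      rw [this]
      by_cases hx : T x ∈ T^[i] ⁻¹' A <;>
        simp [Function.comp, Set.indicator, hx, Set.mem_preimage]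
  -- for each k the truncated averages converge
  have conv : ∀ k : ℕ, ∃ Lk : ℝ, Tendsto
      (fun n : ℕ => (1 / (n : ℝ)) * ∑ i ∈ Finset.range n, ∫ x in T^[i] ⁻¹' A, g k x ∂m)
      atTop (nhds Lk) := by
    intro k
    have hmem : MemLp (g k) 2 m := by
      refine MemLp.of_bound (hg_meas k).aestronglyMeasurable (k : ℝ) (ae_of_all _ fun x => ?_)
      rw [Real.norm_eq_abs, abs_of_nonneg (hg_nonneg k x)]
      exact min_le_right _ _
    set fk : Lp ℝ 2 m := hmem.toLp (g k) with hfk_def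
    have hinner : ∀ i : ℕ,
        (@inner ℝ _ _ ((⇑U)^[i] e) fk) = ∫ x in T^[i] ⁻¹' A, g k x ∂m := by
      intro i
      rw [MeasureTheory.L2.inner_def]
      have hmi : MeasurableSet (T^[i] ⁻¹' A) := (hT.iterate i) hA
      rw [← integral_indicator hmi]
      refine integral_congr_ae ?_
      filter_upwards [he i, hmem.coeFn_toLp] with x hx1 hx2
      rw [hx1, hx2, RCLike.inner_apply, RCLike.conj_to_real]
      by_cases hx : x ∈ T^[i] ⁻¹' A <;> simp [Set.indicator, hx]
    have hVN := U.tendsto_birkhoffAverage_orthogonalProjection hU e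
    have htend := hVN.inner (𝕜 := ℝ) (tendsto_const_nhds (x := fk))
    refine ⟨_, htend.congr fun n => ?_⟩
    rw [birkhoffAverage, birkhoffSum, real_inner_smul_left, sum_inner, one_div]
    simp only [id_eq]
    rw [Finset.sum_congr rfl fun i _ => hinner i]
  -- assemble: Cauchy sequence argument
  set c : ℕ → ℝ := fun n =>
    (1 / (n : ℝ)) * ∑ i ∈ Finset.range n, (μ (T^[i] ⁻¹' A)).toReal with hc_def
  set b : ℕ → ℕ → ℝ := fun k n =>
    (1 / (n : ℝ)) * ∑ i ∈ Finset.range n, ∫ x in T^[i] ⁻¹' A, g k x ∂m with hb_def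
  have hcb : ∀ k n, |c n - b k n| ≤ ε k := by
    intro k n
    rcases Nat.eq_zero_or_pos n with rfl | hn
    · simpa [hc_def, hb_def] using hε_nonneg k
    have hn' : (0 : ℝ) < n := by exact_mod_cast hn
    rw [hc_def, hb_def]
    simp only
    rw [← mul_sub, ← Finset.sum_sub_distrib, abs_mul, abs_of_nonneg (by positivity : (0:ℝ) ≤ 1/(n:ℝ))]
    calc 1 / (n : ℝ) * |∑ i ∈ Finset.range n,
          ((μ (T^[i] ⁻¹' A)).toReal - ∫ x in T^[i] ⁻¹' A, g k x ∂m)|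
        ≤ 1 / (n : ℝ) * ∑ i ∈ Finset.range n,
          |(μ (T^[i] ⁻¹' A)).toReal - ∫ x in T^[i] ⁻¹' A, g k x ∂m| := by
          gcongr
          exact Finset.abs_sum_le_sum_abs _ _
      _ ≤ 1 / (n : ℝ) * ∑ i ∈ Finset.range n, ε k := by
          gcongr with i hi
          exact key k _ ((hT.iterate i) hA)
      _ = ε k := by
          rw [Finset.sum_const, Finset.card_range, nsmul_eq_mul]
          field_simp
  have hcauchy : CauchySeq c := by
    rw [Metric.cauchySeq_iff']
    intro δ hδ
    obtain ⟨k, hk⟩ : ∃ k, ε k < δ / 4 := by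
      have := (hε0.eventually (gt_mem_nhds (show 0 < δ / 4 by linarith))).exists
      exact this
    obtain ⟨Lk, hLk⟩ := conv k
    have hbk : CauchySeq (b k) := hLk.cauchySeq
    rw [Metric.cauchySeq_iff'] at hbk
    obtain ⟨N, hN⟩ := hbk (δ / 4) (by linarith)
    refine ⟨N, fun n hn => ?_⟩
    have h1 : dist (c n) (b k n) ≤ ε k := by rw [Real.dist_eq]; exact hcb k n
    have h2 : dist (b k N) (c N) ≤ ε k := by
      rw [Real.dist_eq, abs_sub_comm]; exact hcb k N
    calc dist (c n) (c N) ≤ dist (c n) (b k n) + dist (b k n) (b k N) + dist (b k N) (c N) :=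
          dist_triangle4 _ _ _ _
      _ < δ / 4 + δ / 4 + δ / 4 :=
          add_lt_add (add_lt_add (h1.trans_lt hk) (hN n hn)) (h2.trans_lt hk)
      _ < δ := by linarith
  obtain ⟨L, hL⟩ := cauchySeq_tendsto_of_complete hcauchy
  exact ⟨L, hL⟩
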